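/- Let A = k°[t_0,…,t_l]/(t_0⋯t_m − π) with 0 ≠ π ∈ k°, q = (k°°, t_0, …, t_l) the prime ideal generated by the maximal ideal k°° of k° and all t_i, and R = A_q. For a nonzero a ∈ A with special representation Σ a_n t^n, the following are equivalent: (a) a is a unit in R; (b) |a_0| = 1; (c) for every r ∈ Δ, |a|_r := max_n |a_n| r^n equals 1. -/

import Mathlib

open scoped NNReal
open MvPolynomial

noncomputable section

namespace Altered

variable {k : Type*} [Field k]

/-- The defining ideal (t₀⋯t_m - π) of a model semistable scheme. -/
def modelIdeal (v : Valuation k ℝ≥0) (l m : ℕ) (π : v.integer) :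
    Ideal (MvPolynomial (Fin (l + 1)) v.integer) :=
  Ideal.span
    {(∏ i ∈ Finset.univ.filter (fun i : Fin (l + 1) => (i : ℕ) ≤ m), X i) - C π}

/-- The coordinate ring A = k°[t₀,…,t_l]/(t₀⋯t_m − π) of a model semistable scheme. -/
abbrev ModelRing (v : Valuation k ℝ≥0) (l m : ℕ) (π : v.integer) :=
  MvPolynomial (Fin (l + 1)) v.integer ⧸ modelIdeal v l m π

variable (v : Valuation k ℝ≥0) (l m : ℕ) (π : v.integer)

/-- An exponent tuple n ∈ ℤ^m × ℕ^(l-m): index j : Fin l stands for the variable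
t_{j+1}, and exponents of t_{j+1} for j ≥ m must be nonnegative. -/
def IsSpecialIndex (n : Fin l → ℤ) : Prop := ∀ j : Fin l, m ≤ (j : ℕ) → 0 ≤ n j

/-- D(n) = −min(0, n₁,…,n_m). -/
def negDeg (n : Fin l → ℤ) : ℕ :=
  (Finset.univ.filter (fun j : Fin l => (j : ℕ) < m)).sup fun j => (-n j).toNat

/-- The special monomial a_n t^n with coefficient a_n = b·π^{D(n)}
(so that the bound |a_n| ≤ |π|^{−min(0,n₁,…,n_m)} holds automatically),
written as an honest element of A: b·π^{D}·t^n = b·t₀^D·∏_{1≤i≤m} t_i^{n_i+D}·∏_{i>m} t_i^{n_i}. -/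
def specialMonomial (b : v.integer) (n : Fin l → ℤ) : ModelRing v l m π :=
  Ideal.Quotient.mk (modelIdeal v l m π)
    (C b * X (0 : Fin (l + 1)) ^ negDeg l m n *
      ∏ j : Fin l, X j.succ ^
        (if (j : ℕ) < m then (n j + negDeg l m n).toNat else (n j).toNat))

/-- The set Δ of monomial semivaluation parameters:
r ∈ [0,1]^{l+1} with r₀⋯r_m = |π|. -/
def Delta : Set (Fin (l + 1) → ℝ≥0) :=
  {r | (∀ i, r i ≤ 1) ∧
    ∏ i ∈ Finset.univ.filter (fun i : Fin (l + 1) => (i : ℕ) ≤ m), r i = v (π : k)}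

/-- The value |a_n t^n|_r = |a_n|·r^n of the special monomial with coefficient
a_n = b·π^{D(n)} at r ∈ Δ.  (On Δ, r_i ≠ 0 whenever a negative exponent occurs.) -/
def monValue (b : v.integer) (n : Fin l → ℤ) (r : Fin (l + 1) → ℝ≥0) : ℝ≥0 :=
  v (b : k) * v (π : k) ^ (negDeg l m n : ℤ) * ∏ j : Fin l, r j.succ ^ (n j)

end Altered

namespace Altered

variable {k : Type*} [Field k] (v : Valuation k ℝ≥0) (l m : ℕ) (π : v.integer)

/-- The prime q = (k°°, t₀,…,t_l) of A, the origin of the model scheme. -/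
def originIdeal : Ideal (ModelRing v l m π) :=
  Ideal.span
    ((Set.range fun i : Fin (l + 1) =>
        Ideal.Quotient.mk (modelIdeal v l m π) (X i)) ∪
      ((fun c : v.integer =>
        Ideal.Quotient.mk (modelIdeal v l m π) (C c)) '' {c | v (c : k) < 1}))

end Altered

namespace Altered

section Aux

variable {k : Type*} [Field k] (v : Valuation k ℝ≥0) (l m : ℕ) (π : v.integer)

lemma negDeg_zero : negDeg l m (0 : Fin l → ℤ) = 0 := by
  simp [negDeg]

lemma specialMonomial_zero (b : v.integer) :
    specialMonomial v l m π b 0 = Ideal.Quotient.mk (modelIdeal v l m π) (C b) := by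
  simp [specialMonomial, negDeg_zero]

lemma monValue_zero (b : v.integer) (r : Fin (l + 1) → ℝ≥0) :
    monValue v l m π b 0 r = v (b : k) := by
  simp [monValue, negDeg_zero]

lemma mk_X_mem (i : Fin (l + 1)) :
    Ideal.Quotient.mk (modelIdeal v l m π) (X i) ∈ originIdeal v l m π :=
  Ideal.subset_span (Or.inl ⟨i, rfl⟩)

lemma mk_C_mem (b : v.integer) (hb : v (b : k) < 1) :
    Ideal.Quotient.mk (modelIdeal v l m π) (C b) ∈ originIdeal v l m π :=
  Ideal.subset_span (Or.inr ⟨b, hb, rfl⟩)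

lemma vpi_ne_zero (hπ : π ≠ 0) : v (π : k) ≠ 0 := by
  simpa [Valuation.ne_zero_iff] using fun h => hπ (Subtype.ext h)

lemma mk_prod_X_eq :
    Ideal.Quotient.mk (modelIdeal v l m π)
      (∏ i ∈ Finset.univ.filter (fun i : Fin (l + 1) => (i : ℕ) ≤ m), X i) =
      Ideal.Quotient.mk (modelIdeal v l m π) (C π) :=
  Ideal.Quotient.eq.mpr (Ideal.subset_span rfl)

lemma mk_C_pi_mem : Ideal.Quotient.mk (modelIdeal v l m π) (C π) ∈ originIdeal v l m π := by
  rw [← mk_prod_X_eq]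
  have h0 : (0 : Fin (l + 1)) ∈ Finset.univ.filter (fun i : Fin (l + 1) => (i : ℕ) ≤ m) := by
    simp
  rw [← Finset.prod_erase_mul _ _ h0, map_mul]
  exact Ideal.mul_mem_left _ _ (mk_X_mem v l m π 0)

lemma vpi_lt_one [hq : (originIdeal v l m π).IsPrime] (hπ : π ≠ 0) : v (π : k) < 1 := by
  rcases lt_or_eq_of_le (show v (π : k) ≤ 1 from π.2) with h | h
  · exact h
  · exfalso
    have hu : IsUnit π := (Valuation.integer.integers v).isUnit_of_one' (by convert h using 2; rfl)
    have hu' : IsUnit (Ideal.Quotient.mk (modelIdeal v l m π) (C π)) :=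
      hu.map ((Ideal.Quotient.mk (modelIdeal v l m π)).comp (C : v.integer →+* _))
    exact hq.ne_top ((originIdeal v l m π).eq_top_of_isUnit_mem (mk_C_pi_mem v l m π) hu')

lemma neg_le_negDeg (n : Fin l → ℤ) (j : Fin l) (hj : (j : ℕ) < m) :
    -(n j) ≤ (negDeg l m n : ℤ) := by
  have h1 : (-n j).toNat ≤ negDeg l m n := Finset.le_sup (f := fun j : Fin l => (-n j).toNat)
    (show j ∈ Finset.univ.filter fun j : Fin l => (j : ℕ) < m by simp [hj])
  omega

lemma specialMonomial_mem (b : v.integer) (n : Fin l → ℤ)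
    (hn : IsSpecialIndex l m n) (h0 : n ≠ 0) :
    specialMonomial v l m π b n ∈ originIdeal v l m π := by
  classical
  set D := negDeg l m n with hD
  obtain ⟨i, hdvd⟩ : ∃ i : Fin (l + 1),
      X i ∣ (C b * X (0 : Fin (l + 1)) ^ D *
        ∏ j : Fin l, X j.succ ^
          (if (j : ℕ) < m then (n j + D).toNat else (n j).toNat)) := by
    rcases Nat.eq_zero_or_pos D with hD0 | hD0
    · have hnn : ∀ j : Fin l, 0 ≤ n j := by
        intro j
        rcases lt_or_ge (j : ℕ) m with hj | hj
        · have := neg_le_negDeg l m n j hj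
          omega
        · exact hn j hj
      obtain ⟨j, hj⟩ : ∃ j : Fin l, n j ≠ 0 := by
        by_contra h
        push_neg at h
        exact h0 (funext h)
      have hpos : 0 < (if (j : ℕ) < m then (n j + D).toNat else (n j).toNat) := by
        have := hnn j
        split <;> omega
      refine ⟨j.succ, dvd_mul_of_dvd_right ?_ _⟩
      exact dvd_trans (dvd_pow_self _ hpos.ne') (Finset.dvd_prod_of_mem _ (Finset.mem_univ j))
    · refine ⟨0, dvd_mul_of_dvd_left ?_ _⟩
      exact dvd_trans (dvd_pow_self _ hD0.ne') (dvd_mul_left _ _)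
  obtain ⟨p, hp⟩ := hdvd
  rw [specialMonomial, ← hD, hp, map_mul]
  rw [← map_mul, mul_comm, map_mul]
  exact Ideal.mul_mem_left _ _ (mk_X_mem v l m π i)

lemma rep_decomp (c : (Fin l → ℤ) →₀ v.integer) :
    ∑ n ∈ c.support, specialMonomial v l m π (c n) n =
      Ideal.Quotient.mk (modelIdeal v l m π) (C (c 0)) +
        ∑ n ∈ c.support.erase 0, specialMonomial v l m π (c n) n := by
  classical
  rw [← specialMonomial_zero]
  by_cases h : (0 : Fin l → ℤ) ∈ c.support
  · exact (Finset.add_sum_erase _ _ h).symm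
  · rw [Finset.erase_eq_of_notMem h, Finsupp.notMem_support_iff.mp h]
    simp [specialMonomial]

lemma residual_mem (c : (Fin l → ℤ) →₀ v.integer)
    (hsp : ∀ n ∈ c.support, IsSpecialIndex l m n) :
    ∑ n ∈ c.support.erase 0, specialMonomial v l m π (c n) n ∈ originIdeal v l m π := by
  refine Ideal.sum_mem _ fun n hn => ?_
  exact specialMonomial_mem v l m π (c n) n (hsp n (Finset.mem_of_mem_erase hn))
    (Finset.ne_of_mem_erase hn)

lemma prod_zpow_const {α : Type*} (s : Finset α) {x : ℝ≥0} (hx : x ≠ 0) (f : α → ℤ) :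
    ∏ i ∈ s, x ^ f i = x ^ (∑ i ∈ s, f i) := by
  classical
  induction s using Finset.induction_on with
  | empty => simp
  | insert a s h ih => rw [Finset.prod_insert h, Finset.sum_insert h, ih, zpow_add₀ hx]

lemma card_filter_le_eq (hm : m ≤ l) :
    (Finset.univ.filter fun i : Fin (l + 1) => (i : ℕ) ≤ m).card = m + 1 := by
  have he : (Finset.univ.filter fun i : Fin (l + 1) => (i : ℕ) ≤ m)
      = Finset.map (Fin.castLEEmb (by omega : m + 1 ≤ l + 1)) Finset.univ := by
    ext i
    simp only [Finset.mem_filter, Finset.mem_map, Finset.mem_univ, true_and, Fin.castLEEmb,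
      Function.Embedding.coeFn_mk]
    constructor
    · intro hi
      exact ⟨⟨(i : ℕ), by omega⟩, by ext; simp⟩
    · rintro ⟨j, rfl⟩
      simpa using Nat.lt_succ_iff.mp j.2
  rw [he]
  simp

lemma card_filter_lt_le :
    (Finset.univ.filter fun j : Fin l => (j : ℕ) < m).card ≤ m := by
  have := Finset.card_le_card_of_injOn (f := fun j : Fin l => (j : ℕ))
    (s := Finset.univ.filter fun j : Fin l => (j : ℕ) < m) (t := Finset.range m)
    (fun j hj => by simpa using (Finset.mem_filter.mp hj).2)
    (fun a _ b _ h => Fin.val_injective h)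
  simpa using this

end Aux

end Altered
namespace Altered

section Aux2

variable {k : Type*} [Field k] (v : Valuation k ℝ≥0) (l m : ℕ) (π : v.integer)

lemma monValue_le_one (hπ : π ≠ 0) (b : v.integer) (n : Fin l → ℤ)
    (hn : IsSpecialIndex l m n) (r : Fin (l + 1) → ℝ≥0) (hr : r ∈ Delta v l m π) :
    monValue v l m π b n r ≤ 1 := by
  classical
  obtain ⟨hr1, hr2⟩ := hr
  have hprod : v (π : k) = r 0 * ∏ j : Fin l, (if (j : ℕ) < m then r j.succ else 1) := by
    rw [← hr2, Finset.prod_filter, Fin.prod_univ_succ,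
      if_pos (show ((0 : Fin (l + 1)) : ℕ) ≤ m from Nat.zero_le m)]
    congr 1
  have hne : ∀ i ∈ Finset.univ.filter (fun i : Fin (l + 1) => (i : ℕ) ≤ m), r i ≠ 0 := by
    intro i hi h0
    exact vpi_ne_zero v π hπ (by rw [← hr2]; exact Finset.prod_eq_zero hi h0)
  have hr0 : r 0 ≠ 0 := hne 0 (by simp)
  have hrj : ∀ j : Fin l, (j : ℕ) < m → r j.succ ≠ 0 := fun j hj =>
    hne j.succ (by simp only [Finset.mem_filter, Finset.mem_univ, true_and, Fin.val_succ]; omega)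
  set D := negDeg l m n with hDdef
  have hπpow : (v (π : k)) ^ (D : ℤ) =
      r 0 ^ (D : ℤ) * ∏ j : Fin l, (if (j : ℕ) < m then r j.succ else 1) ^ (D : ℤ) := by
    rw [hprod, mul_zpow, Finset.prod_zpow]
  have key : monValue v l m π b n r =
      v (b : k) * r 0 ^ (D : ℤ) *
        ∏ j : Fin l, ((if (j : ℕ) < m then r j.succ else 1) ^ (D : ℤ) * r j.succ ^ (n j)) := by
    simp only [monValue, ← hDdef, hπpow, Finset.prod_mul_distrib]
    ring
  rw [key]
  have hfac : ∀ j : Fin l,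
      ((if (j : ℕ) < m then r j.succ else 1) ^ (D : ℤ) * r j.succ ^ (n j)) ≤ 1 := by
    intro j
    by_cases hj : (j : ℕ) < m
    · simp only [if_pos hj]
      rw [← zpow_add₀ (hrj j hj)]
      have he : 0 ≤ (D : ℤ) + n j := by
        have := neg_le_negDeg l m n j hj
        omega
      rw [show (D : ℤ) + n j = (((D : ℤ) + n j).toNat : ℤ) from (Int.toNat_of_nonneg he).symm,
        zpow_natCast]
      exact pow_le_one' (hr1 j.succ) _
    · simp only [if_neg hj, one_zpow, one_mul]
      have he : 0 ≤ n j := hn j (le_of_not_gt hj)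
      rw [show n j = ((n j).toNat : ℤ) from (Int.toNat_of_nonneg he).symm, zpow_natCast]
      exact pow_le_one' (hr1 j.succ) _
  have h0pow : r 0 ^ (D : ℤ) ≤ 1 := by
    rw [zpow_natCast]; exact pow_le_one' (hr1 0) _
  exact mul_le_one' (mul_le_one' b.2 h0pow) (Finset.prod_le_one' fun i _ => hfac i)

end Aux2

end Altered

namespace Altered

/-!
STATEMENT 9: with A = k°[t₀,…,t_l]/(t₀⋯t_m − π), q = (k°°, t₀,…,t_l) and R = A_q,
for a nonzero a ∈ A with special representation Σ a_n t^n (encoded by the finitely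
supported c with a_n = c(n)·π^{D(n)}), the following are equivalent:
(a) a is a unit in R; (b) |a₀| = 1; (c) |a|_r = max_n |a_n| r^n equals 1 for all r ∈ Δ.
-/

set_option maxHeartbeats 1000000 in
theorem unit_in_local_ring_iff
    {k : Type*} [Field k] (v : Valuation k ℝ≥0)
    (hv : ∃ x : k, v x ≠ 0 ∧ v x ≠ 1)
    (l m : ℕ) (hm : m ≤ l) (π : v.integer) (hπ : π ≠ 0)
    [hq : (originIdeal v l m π).IsPrime]
    (a : ModelRing v l m π) (ha : a ≠ 0)
    (c : (Fin l → ℤ) →₀ v.integer)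
    (hsp : ∀ n ∈ c.support, IsSpecialIndex l m n)
    (hrep : a = ∑ n ∈ c.support, specialMonomial v l m π (c n) n) :
    List.TFAE
      [IsUnit (@algebraMap (ModelRing v l m π)
          (Localization.AtPrime (R := ModelRing v l m π) (originIdeal v l m π))
          (Ideal.Quotient.commSemiring _) _ _ a),
       v ((c (0 : Fin l → ℤ) : v.integer) : k) = 1,
       ∀ r ∈ Delta v l m π,
         (c.support.sup fun n => monValue v l m π (c n) n r) = 1] := by
  classical
  have hπv : v (π : k) ≠ 0 := vpi_ne_zero v π hπ
  have hπ1 : v (π : k) < 1 := vpi_lt_one v l m π hπ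
  have hd : ∑ n ∈ c.support.erase 0, specialMonomial v l m π (c n) n ∈ originIdeal v l m π :=
    residual_mem v l m π c hsp
  rw [rep_decomp v l m π c] at hrep
  tfae_have 1 ↔ 2 := by
    rw [IsLocalization.AtPrime.isUnit_to_map_iff
      (Localization.AtPrime (R := ModelRing v l m π) (originIdeal v l m π)) (originIdeal v l m π) a]
    show a ∉ originIdeal v l m π ↔ _
    constructor
    · intro h
      by_contra hne
      have hlt : v ((c 0 : v.integer) : k) < 1 := lt_of_le_of_ne (c 0).2 hne
      exact h (hrep ▸ (originIdeal v l m π).add_mem (mk_C_mem v l m π _ hlt) hd)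
    · intro h1 hmem
      have hC : Ideal.Quotient.mk (modelIdeal v l m π) (C (c 0)) ∈ originIdeal v l m π := by
        have := (originIdeal v l m π).sub_mem hmem hd
        rwa [hrep, add_sub_cancel_right] at this
      have hu : IsUnit (c 0) := (Valuation.integer.integers v).isUnit_of_one' (by convert h1 using 2; rfl)
      exact hq.ne_top ((originIdeal v l m π).eq_top_of_isUnit_mem hC
        (hu.map ((Ideal.Quotient.mk (modelIdeal v l m π)).comp (C : v.integer →+* _))))
  tfae_have 2 → 3 := by
    intro h2 r hr
    have h0mem : (0 : Fin l → ℤ) ∈ c.support :=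
      Finsupp.mem_support_iff.mpr (fun h0 => by rw [h0] at h2; simp at h2)
    refine le_antisymm (Finset.sup_le fun n hn =>
      monValue_le_one v l m π hπ (c n) n (hsp n hn) r hr) ?_
    have hle : monValue v l m π (c 0) 0 r ≤ c.support.sup fun n => monValue v l m π (c n) n r :=
      Finset.le_sup (f := fun n => monValue v l m π (c n) n r) h0mem
    rwa [monValue_zero, h2] at hle
  tfae_have 3 → 2 := by
    intro h3
    set t : ℝ := ((m + 1 : ℕ) : ℝ)⁻¹ with ht
    set ε : ℝ≥0 := (v (π : k)) ^ t with hε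
    have htpos : (0 : ℝ) < t := by positivity
    have hε1 : ε < 1 := NNReal.rpow_lt_one hπ1 htpos
    have hε0 : ε ≠ 0 := by
      rw [hε, Ne, NNReal.rpow_eq_zero_iff]
      exact fun h => hπv h.1
    have hεpow : ε ^ (m + 1) = v (π : k) := by
      rw [hε, ← NNReal.rpow_natCast ((v (π : k)) ^ t) (m + 1), ← NNReal.rpow_mul, ht,
        inv_mul_cancel₀ (by positivity), NNReal.rpow_one]
    have hrΔ : (fun _ : Fin (l + 1) => ε) ∈ Delta v l m π := by
      refine ⟨fun _ => hε1.le, ?_⟩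
      rw [Finset.prod_const, card_filter_le_eq l m hm, hεpow]
    have hsup := h3 _ hrΔ
    have hnonempty : c.support.Nonempty := by
      rcases Finset.eq_empty_or_nonempty c.support with h | h
      · rw [h] at hsup; simp at hsup
      · exact h
    obtain ⟨n, hnmem, hneq⟩ := Finset.exists_mem_eq_sup _ hnonempty
      (fun n => monValue v l m π (c n) n (fun _ => ε))
    by_cases h0 : n = 0
    · rw [h0, monValue_zero] at hneq
      rw [← hneq, hsup]
    · exfalso
      set D := negDeg l m n with hDdef
      set S : ℤ := ∑ j : Fin l, n j with hS
      have hspn : IsSpecialIndex l m n := hsp n hnmem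
      -- lower bound on the total exponent
      have hE : 1 ≤ ((m + 1) * D : ℕ) + S := by
        rcases Nat.eq_zero_or_pos D with hD0 | hD0
        · have hnn : ∀ j : Fin l, 0 ≤ n j := by
            intro j
            rcases lt_or_ge (j : ℕ) m with hj | hj
            · have := neg_le_negDeg l m n j hj
              omega
            · exact hspn j hj
          obtain ⟨j0, hj0⟩ : ∃ j : Fin l, n j ≠ 0 := by
            by_contra h
            push_neg at h
            exact h0 (funext h)
          have h1 : (1 : ℤ) ≤ n j0 := by have := hnn j0; omega
          have h2 : n j0 ≤ S :=
            Finset.single_le_sum (fun j _ => hnn j) (Finset.mem_univ j0)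
          omega
        · have hlow : ∀ j : Fin l, (if (j : ℕ) < m then -(D : ℤ) else 0) ≤ n j := by
            intro j
            split
            · next hj => have := neg_le_negDeg l m n j hj; omega
            · next hj => exact hspn j (le_of_not_gt hj)
          have hsum : ((Finset.univ.filter fun j : Fin l => (j : ℕ) < m).card : ℤ) * (-(D : ℤ)) ≤ S := by
            calc ((Finset.univ.filter fun j : Fin l => (j : ℕ) < m).card : ℤ) * (-(D : ℤ))
                = ∑ j ∈ Finset.univ.filter fun j : Fin l => (j : ℕ) < m, (-(D : ℤ)) := by
                  rw [Finset.sum_const, nsmul_eq_mul]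
              _ = ∑ j : Fin l, (if (j : ℕ) < m then -(D : ℤ) else 0) := by
                  rw [Finset.sum_filter]
              _ ≤ S := Finset.sum_le_sum fun j _ => hlow j
          have hcard : ((Finset.univ.filter fun j : Fin l => (j : ℕ) < m).card : ℤ) ≤ m :=
            Int.ofNat_le.mpr (card_filter_lt_le l m)
          have hmul : ((Finset.univ.filter fun j : Fin l => (j : ℕ) < m).card : ℤ) * (D : ℤ) ≤
              (m : ℤ) * (D : ℤ) :=
            mul_le_mul_of_nonneg_right hcard (by positivity)
          have hcast : (((m + 1) * D : ℕ) : ℤ) = (m : ℤ) * D + D := by push_cast; ring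
          have hD1 : (1 : ℤ) ≤ (D : ℤ) := by exact_mod_cast hD0
          linarith
      have hval : monValue v l m π (c n) n (fun _ : Fin (l + 1) => ε) =
          v ((c n : v.integer) : k) * ε ^ ((((m + 1) * D : ℕ) : ℤ) + S) := by
        simp only [monValue, ← hDdef]
        rw [prod_zpow_const _ hε0, ← hS, zpow_natCast, ← hεpow, ← pow_mul,
          ← zpow_natCast ε ((m + 1) * D), mul_assoc, ← zpow_add₀ hε0]
      have hlt : monValue v l m π (c n) n (fun _ : Fin (l + 1) => ε) < 1 := by
        rw [hval]
        have h4 : ε ^ ((((m + 1) * D : ℕ) : ℤ) + S) ≤ ε ^ (1 : ℤ) :=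
          zpow_le_zpow_right_of_le_one₀ (zero_lt_iff.mpr hε0) hε1.le hE
        calc v ((c n : v.integer) : k) * ε ^ ((((m + 1) * D : ℕ) : ℤ) + S)
            ≤ ε ^ ((((m + 1) * D : ℕ) : ℤ) + S) :=
              mul_le_of_le_one_left zero_le (c n).2
          _ ≤ ε ^ (1 : ℤ) := h4
          _ < 1 := by rwa [zpow_one]
      rw [← hneq, hsup] at hlt
      exact lt_irrefl _ hlt
  tfae_finish


end Altered
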